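/- (Law of large numbers for Gibbs measures.) Assume hypotheses (H1) and (H2). Fix λ ∈ ℝ and let μ be a Gibbs measure at parameter λ, i.e. a Borel probability measure on X for which there is C ≥ 1 with C^{−1} ≤ μ([x_0,…,x_{n−1}]) · q^n Z_n(λ)/exp(λ S_n f(x)) ≤ C for all n ≥ 1, x ∈ X. Then for μ-almost every x ∈ X: φ'₋(λ) ≤ liminf_{N→∞} S_N f(x)/N ≤ limsup_{N→∞} S_N f(x)/N ≤ φ'₊(λ), where φ'₋(λ) and φ'₊(λ) are the left and right derivatives of the convex function φ at λ. -/

import Mathlib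

open MeasureTheory Filter Finset
open scoped ENNReal Topology

noncomputable section

/-- The shift map `T` on `ℕ → S`, `(Tx)_n = x_{n+1}`. -/
def shift {S : Type*} (x : ℕ → S) : ℕ → S := fun n => x (n + 1)

/-- The cylinder `[a_0, …, a_{m-1}]` of all `y` with `y_i = a_i` for `0 ≤ i < m`. -/
def cyl {S : Type*} {m : ℕ} (a : Fin m → S) : Set (ℕ → S) :=
  {y : ℕ → S | ∀ i : Fin m, y i = a i}

/-- The partial weighted Birkhoff sum `S_{m,n} f(x) = ∑_{k=m}^{n-1} f_k(T^k x)`. -/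
def birk {S : Type*} (f : ℕ → (ℕ → S) → ℝ) (m n : ℕ) (x : ℕ → S) : ℝ :=
  ∑ k ∈ Finset.Ico m n, f k (shift^[k] x)

/-- The partition function `Z_{m,n}(λ) = ∫ exp(λ S_{m,n}f) dσ`. -/
def Zmn {S : Type*} [MeasurableSpace S] (σ : Measure (ℕ → S))
    (f : ℕ → (ℕ → S) → ℝ) (lam : ℝ) (m n : ℕ) : ℝ :=
  ∫ x, Real.exp (lam * birk f m n x) ∂σ

/-- Hypothesis (H2): uniformly bounded distortion. -/
def H2 {S : Type*} (f : ℕ → (ℕ → S) → ℝ) (D : ℝ) : Prop :=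
  ∀ N : ℕ, 1 ≤ N → ∀ x y : ℕ → S, (∀ i, i < N → x i = y i) →
    ∑ k ∈ Finset.range N, |f k (shift^[k] x) - f k (shift^[k] y)| ≤ D

/-! ### Auxiliary lemmas -/

section Aux

variable {S : Type*}

lemma continuous_shift [TopologicalSpace S] : Continuous (shift (S := S)) :=
  continuous_pi fun n => continuous_apply (n + 1)

lemma continuous_birk [TopologicalSpace S] {f : ℕ → (ℕ → S) → ℝ}
    (hfc : ∀ n, Continuous (f n)) (m n : ℕ) : Continuous (birk f m n) := by
  unfold birk
  exact continuous_finset_sum _ fun k _ => (hfc k).comp (continuous_shift.iterate k)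

lemma abs_birk_le {f : ℕ → (ℕ → S) → ℝ} {M : ℝ} (hfb : ∀ n x, |f n x| ≤ M)
    (N : ℕ) (x : ℕ → S) : |birk f 0 N x| ≤ N * M := by
  calc |birk f 0 N x| ≤ ∑ k ∈ Finset.Ico 0 N, |f k (shift^[k] x)| :=
        Finset.abs_sum_le_sum_abs _ _
    _ ≤ ∑ _k ∈ Finset.Ico 0 N, M := Finset.sum_le_sum fun k _ => hfb k _
    _ = N * M := by simp [mul_comm]

lemma birk_dist {f : ℕ → (ℕ → S) → ℝ} {D : ℝ} (hH2 : H2 f D) (hD : 0 ≤ D)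
    (N : ℕ) (x y : ℕ → S) (h : ∀ i, i < N → x i = y i) :
    |birk f 0 N x - birk f 0 N y| ≤ D := by
  rcases Nat.eq_zero_or_pos N with h0 | h1
  · simpa [h0, birk] using hD
  · calc |birk f 0 N x - birk f 0 N y|
        = |∑ k ∈ Finset.range N, (f k (shift^[k] x) - f k (shift^[k] y))| := by
          simp [birk, Finset.sum_sub_distrib, ← Finset.range_eq_Ico]
      _ ≤ ∑ k ∈ Finset.range N, |f k (shift^[k] x) - f k (shift^[k] y)| :=
          Finset.abs_sum_le_sum_abs _ _
      _ ≤ D := hH2 N h1 x y h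

/-- Extension of a word to a point of the full shift by a fixed symbol. -/
def ext0 (s₀ : S) {N : ℕ} (w : Fin N → S) : ℕ → S :=
  fun i => if h : i < N then w ⟨i, h⟩ else s₀

lemma birk_ext0_close {f : ℕ → (ℕ → S) → ℝ} {D : ℝ} (hH2 : H2 f D) (hD : 0 ≤ D)
    (s₀ : S) (N : ℕ) (x : ℕ → S) :
    |birk f 0 N x - birk f 0 N (ext0 s₀ (fun i : Fin N => x i))| ≤ D :=
  birk_dist hH2 hD N x _ (fun i hi => by simp [ext0, hi])

lemma measurableSet_cyl [MeasurableSpace S] [MeasurableSingletonClass S]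
    {N : ℕ} (w : Fin N → S) : MeasurableSet (cyl w) := by
  have h : cyl w = ⋂ i : Fin N, (fun y : ℕ → S => y i) ⁻¹' {w i} := by
    ext y; simp [cyl]
  rw [h]
  exact MeasurableSet.iInter fun i =>
    (measurable_pi_apply _) (measurableSet_singleton _)

end Aux

section Main

variable {S : Type*} [Fintype S] [TopologicalSpace S]
  [DiscreteTopology S] [MeasurableSpace S] [BorelSpace S]

lemma integrable_exp_birk (σ : Measure (ℕ → S)) [IsProbabilityMeasure σ]
    {f : ℕ → (ℕ → S) → ℝ} (hfc : ∀ n, Continuous (f n))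
    {M : ℝ} (hfb : ∀ n x, |f n x| ≤ M) (s : ℝ) (N : ℕ) :
    Integrable (fun x => Real.exp (s * birk f 0 N x)) σ := by
  have hc : Continuous fun x : ℕ → S => Real.exp (s * birk f 0 N x) :=
    Real.continuous_exp.comp (continuous_const.mul (continuous_birk hfc 0 N))
  refine Integrable.mono' (integrable_const (Real.exp (|s| * (N * M))))
    hc.aestronglyMeasurable (ae_of_all _ fun x => ?_)
  rw [Real.norm_eq_abs, Real.abs_exp]
  apply Real.exp_le_exp.mpr
  calc s * birk f 0 N x ≤ |s * birk f 0 N x| := le_abs_self _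
    _ = |s| * |birk f 0 N x| := abs_mul _ _
    _ ≤ |s| * (N * M) := mul_le_mul_of_nonneg_left (abs_birk_le hfb N x) (abs_nonneg s)

lemma Zmn_pos (σ : Measure (ℕ → S)) [IsProbabilityMeasure σ]
    {f : ℕ → (ℕ → S) → ℝ} (hfc : ∀ n, Continuous (f n))
    {M : ℝ} (hfb : ∀ n x, |f n x| ≤ M) (s : ℝ) (N : ℕ) :
    0 < Zmn σ f s 0 N := by
  have h2 : Real.exp (-(|s| * (N * M))) ≤ Zmn σ f s 0 N := by
    have hmono := integral_mono (μ := σ)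
      (integrable_const (Real.exp (-(|s| * (N * M)))))
      (integrable_exp_birk σ hfc hfb s N) (fun x => ?_)
    · simpa [Zmn] using hmono
    · apply Real.exp_le_exp.mpr
      have h1 : |s * birk f 0 N x| ≤ |s| * (N * M) := by
        rw [abs_mul]
        exact mul_le_mul_of_nonneg_left (abs_birk_le hfb N x) (abs_nonneg s)
      linarith [neg_abs_le (s * birk f 0 N x)]
  exact lt_of_lt_of_le (Real.exp_pos _) h2

lemma key_lemma (hq : 2 ≤ Fintype.card S)
    (σ : Measure (ℕ → S)) [IsProbabilityMeasure σ]
    (hσ : ∀ (m : ℕ) (a : Fin m → S), σ (cyl a) = (Fintype.card S : ℝ≥0∞)⁻¹ ^ m)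
    (f : ℕ → (ℕ → S) → ℝ) (hfc : ∀ n, Continuous (f n))
    (M : ℝ) (hfb : ∀ n x, |f n x| ≤ M)
    (φ : ℝ → ℝ)
    (hH1 : ∀ t : ℝ, Tendsto (fun n : ℕ => Real.log (Zmn σ f t 0 n) / n) atTop (𝓝 (φ t)))
    (D : ℝ) (hH2 : H2 f D)
    (lam : ℝ) (μ : Measure (ℕ → S)) [IsProbabilityMeasure μ] (C : ℝ) (hC : 1 ≤ C)
    (hGibbs : ∀ n : ℕ, 1 ≤ n → ∀ x : ℕ → S,
      C⁻¹ ≤ (μ (cyl fun i : Fin n => x i)).toReal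
          * ((Fintype.card S : ℝ) ^ n * Zmn σ f lam 0 n) / Real.exp (lam * birk f 0 n x) ∧
      (μ (cyl fun i : Fin n => x i)).toReal
          * ((Fintype.card S : ℝ) ^ n * Zmn σ f lam 0 n) / Real.exp (lam * birk f 0 n x) ≤ C)
    (t a : ℝ) (hδ : φ (lam + t) - φ lam < t * a) :
    ∀ᵐ x ∂μ, ∀ᶠ N : ℕ in atTop, t * birk f 0 N x < t * ((N : ℝ) * a) := by
  haveI : MeasurableSingletonClass S := ⟨fun a => (isClosed_discrete {a}).measurableSet⟩
  have hS : Nonempty S := Fintype.card_pos_iff.mp (by omega)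
  obtain ⟨s₀⟩ := hS
  have hD : 0 ≤ D := by
    simpa using hH2 1 le_rfl (fun _ => s₀) (fun _ => s₀) (fun _ _ => rfl)
  have hC0 : (0:ℝ) < C := lt_of_lt_of_le one_pos hC
  have hqR : (0:ℝ) < (Fintype.card S : ℝ) := by
    have : 0 < Fintype.card S := by omega
    exact_mod_cast this
  set qR : ℝ := (Fintype.card S : ℝ) with hqRdef
  have hZpos : ∀ (s : ℝ) (N : ℕ), 0 < Zmn σ f s 0 N := fun s N => Zmn_pos σ hfc hfb s N
  set A : ℕ → Set (ℕ → S) := fun N => {x | t * ((N : ℝ) * a) ≤ t * birk f 0 N x} with hA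
  set K : ℝ := C * Real.exp (|t| * D + |lam + t| * D) with hK
  have hK0 : 0 < K := mul_pos hC0 (Real.exp_pos _)
  set B : ℕ → ℝ := fun N =>
    K * Real.exp (-(t * ((N : ℝ) * a))) * (Zmn σ f (lam + t) 0 N / Zmn σ f lam 0 N) with hBdef
  have hB0 : ∀ N, 0 < B N := fun N =>
    mul_pos (mul_pos hK0 (Real.exp_pos _)) (div_pos (hZpos _ N) (hZpos _ N))
  -- Main bound
  have hbound : ∀ N : ℕ, 1 ≤ N → μ (A N) ≤ ENNReal.ofReal (B N) := by
    intro N hN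
    have hZl0 : 0 < Zmn σ f lam 0 N := hZpos lam N
    have hZlt0 : 0 < Zmn σ f (lam + t) 0 N := hZpos (lam + t) N
    set Zl := Zmn σ f lam 0 N with hZl
    set Zlt := Zmn σ f (lam + t) 0 N with hZlt
    set g : (Fin N → S) → ℝ := fun w => birk f 0 N (ext0 s₀ w) with hg
    set T : Finset (Fin N → S) :=
      Finset.univ.filter (fun w => t * ((N : ℝ) * a) - |t| * D ≤ t * g w) with hT
    -- Step 1: covering by cylinders
    have hsub : A N ⊆ ⋃ w ∈ T, cyl w := by
      intro x hx
      have hxA : t * ((N : ℝ) * a) ≤ t * birk f 0 N x := hx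
      have hclose : |birk f 0 N x - g (fun i : Fin N => x i)| ≤ D :=
        birk_ext0_close hH2 hD s₀ N x
      have hwT : (fun i : Fin N => x i) ∈ T := by
        rw [hT, Finset.mem_filter]
        refine ⟨Finset.mem_univ _, ?_⟩
        have h1 : |t * birk f 0 N x - t * g (fun i : Fin N => x i)| ≤ |t| * D := by
          rw [← mul_sub, abs_mul]
          exact mul_le_mul_of_nonneg_left hclose (abs_nonneg t)
        have h2 := abs_le.mp h1
        linarith [h2.1, h2.2]
      exact Set.mem_biUnion hwT (fun i => rfl)
    -- Step 2
    have h2 : μ (A N) ≤ ∑ w ∈ T, μ (cyl w) :=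
      (measure_mono hsub).trans (measure_biUnion_finset_le T _)
    -- per-cylinder bound
    set bw : (Fin N → S) → ℝ := fun w =>
      C * (Real.exp (|t| * D - t * ((N : ℝ) * a)) * Real.exp ((lam + t) * g w))
        / (qR ^ N * Zl) with hbw
    have hP : 0 < qR ^ N * Zl := mul_pos (pow_pos hqR N) hZl0
    have hbw0 : ∀ w, 0 ≤ bw w := fun w =>
      div_nonneg (mul_nonneg hC0.le (mul_nonneg (Real.exp_pos _).le (Real.exp_pos _).le))
        hP.le
    have h3 : ∀ w ∈ T, μ (cyl w) ≤ ENNReal.ofReal (bw w) := by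
      intro w hwT
      have hproj : (fun i : Fin N => ext0 s₀ w i) = w := funext fun i => by
        simp [ext0, i.isLt]
      have hg2 := (hGibbs N hN (ext0 s₀ w)).2
      rw [hproj] at hg2
      set m := (μ (cyl w)).toReal with hm
      have h4 : m * (qR ^ N * Zl) ≤ C * Real.exp (lam * birk f 0 N (ext0 s₀ w)) := by
        have := (div_le_iff₀ (Real.exp_pos (lam * birk f 0 N (ext0 s₀ w)))).mp hg2
        linarith
      have h5 : m ≤ C * Real.exp (lam * g w) / (qR ^ N * Zl) := (le_div_iff₀ hP).mpr h4
      have hTw : t * ((N : ℝ) * a) - |t| * D ≤ t * g w := (Finset.mem_filter.mp hwT).2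
      have h6 : Real.exp (lam * g w)
          ≤ Real.exp (|t| * D - t * ((N : ℝ) * a)) * Real.exp ((lam + t) * g w) := by
        rw [← Real.exp_add]
        apply Real.exp_le_exp.mpr
        have hexp : (lam + t) * g w = lam * g w + t * g w := by ring
        linarith [hexp]
      have h7 : m ≤ bw w := by
        refine h5.trans ?_
        rw [hbw]
        exact (div_le_div_iff_of_pos_right hP).mpr (mul_le_mul_of_nonneg_left h6 hC0.le)
      calc μ (cyl w) = ENNReal.ofReal m := (ENNReal.ofReal_toReal (measure_ne_top μ _)).symm
        _ ≤ ENNReal.ofReal (bw w) := ENNReal.ofReal_le_ofReal h7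
    -- integral comparison
    have hmeascyl : ∀ w : Fin N → S, MeasurableSet (cyl w) := fun w => measurableSet_cyl w
    have hsum : ∑ w : Fin N → S, (qR⁻¹) ^ N * Real.exp ((lam + t) * g w)
        ≤ Real.exp (|lam + t| * D) * Zlt := by
      have hGfun : (fun x : ℕ → S => Real.exp ((lam + t) * g (fun i : Fin N => x i)))
          = fun x => ∑ w : Fin N → S,
              (cyl w).indicator (fun _ => Real.exp ((lam + t) * g w)) x := by
        funext x
        symm
        refine (Finset.sum_eq_single_of_mem (fun i : Fin N => x i) (Finset.mem_univ _)
          (fun w _ hne => ?_)).trans (Set.indicator_of_mem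
            (show x ∈ cyl (fun i : Fin N => x i) from fun i => rfl) _)
        apply Set.indicator_of_notMem
        intro hxw
        exact hne (funext fun i => (hxw i).symm)
      have hint1 : Integrable
          (fun x : ℕ → S => Real.exp ((lam + t) * g (fun i : Fin N => x i))) σ := by
        rw [hGfun]
        exact integrable_finset_sum _ fun w _ => (integrable_const _).indicator (hmeascyl w)
      have heq : ∫ x, Real.exp ((lam + t) * g (fun i : Fin N => x i)) ∂σ
          = ∑ w : Fin N → S, (qR⁻¹) ^ N * Real.exp ((lam + t) * g w) := by
        rw [hGfun, integral_finset_sum _ fun w _ => (integrable_const _).indicator (hmeascyl w)]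
        refine Finset.sum_congr rfl fun w _ => ?_
        rw [integral_indicator_const _ (hmeascyl w), measureReal_def, hσ N w]
        rw [smul_eq_mul]
        congr 1
        simp [ENNReal.toReal_pow, ENNReal.toReal_inv, hqRdef]
      have hle : ∫ x, Real.exp ((lam + t) * g (fun i : Fin N => x i)) ∂σ
          ≤ ∫ x, Real.exp (|lam + t| * D) * Real.exp ((lam + t) * birk f 0 N x) ∂σ := by
        refine integral_mono hint1 ((integrable_exp_birk σ hfc hfb (lam + t) N).const_mul _)
          fun x => ?_
        rw [← Real.exp_add]
        apply Real.exp_le_exp.mpr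
        have hclose := birk_ext0_close hH2 hD s₀ N x
        have h1 : |(lam + t) * g (fun i : Fin N => x i) - (lam + t) * birk f 0 N x|
            ≤ |lam + t| * D := by
          rw [← mul_sub, abs_mul]
          refine mul_le_mul_of_nonneg_left ?_ (abs_nonneg _)
          rw [abs_sub_comm]
          exact hclose
        linarith [(abs_le.mp h1).2]
      have hR : ∫ x, Real.exp (|lam + t| * D) * Real.exp ((lam + t) * birk f 0 N x) ∂σ
          = Real.exp (|lam + t| * D) * Zlt := by
        rw [integral_const_mul]
        rfl
      calc ∑ w : Fin N → S, (qR⁻¹) ^ N * Real.exp ((lam + t) * g w)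
          = ∫ x, Real.exp ((lam + t) * g (fun i : Fin N => x i)) ∂σ := heq.symm
        _ ≤ _ := hle
        _ = _ := hR
    -- Step 4
    have h8 : ∑ w ∈ T, bw w ≤ B N := by
      have hTsub : ∑ w ∈ T, bw w ≤ ∑ w : Fin N → S, bw w :=
        Finset.sum_le_sum_of_subset_of_nonneg (Finset.subset_univ T) (fun w _ _ => hbw0 w)
      refine hTsub.trans ?_
      have hfact : ∀ w : Fin N → S, bw w
          = (C * Real.exp (|t| * D - t * ((N : ℝ) * a)) / Zl)
            * ((qR⁻¹) ^ N * Real.exp ((lam + t) * g w)) := by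
        intro w
        rw [hbw, inv_pow]
        field_simp
      rw [Finset.sum_congr rfl (fun w _ => hfact w), ← Finset.mul_sum]
      have hc1 : 0 ≤ C * Real.exp (|t| * D - t * ((N : ℝ) * a)) / Zl :=
        div_nonneg (mul_nonneg hC0.le (Real.exp_pos _).le) hZl0.le
      refine (mul_le_mul_of_nonneg_left hsum hc1).trans_eq ?_
      rw [hBdef, hK]
      have e1 : Real.exp (|t| * D - t * ((N : ℝ) * a))
          = Real.exp (|t| * D) * Real.exp (-(t * ((N : ℝ) * a))) := by
        rw [← Real.exp_add]; ring_nf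
      have e2 : Real.exp (|t| * D + |lam + t| * D)
          = Real.exp (|t| * D) * Real.exp (|lam + t| * D) := Real.exp_add _ _
      rw [e1, e2]
      field_simp
      ring
      have hZe : Zmn σ f lam 0 N = Zl := rfl
      rw [hZe, mul_comm Zl, mul_assoc, mul_inv_cancel₀ hZl0.ne', mul_one]
    calc μ (A N) ≤ ∑ w ∈ T, μ (cyl w) := h2
      _ ≤ ∑ w ∈ T, ENNReal.ofReal (bw w) := Finset.sum_le_sum h3
      _ = ENNReal.ofReal (∑ w ∈ T, bw w) :=
          (ENNReal.ofReal_sum_of_nonneg (fun w _ => hbw0 w)).symm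
      _ ≤ ENNReal.ofReal (B N) := ENNReal.ofReal_le_ofReal h8
  -- the limit of (1/N) log B N
  set L : ℝ := φ (lam + t) - φ lam - t * a with hL
  have hL0 : L < 0 := by rw [hL]; linarith
  have htend : Tendsto (fun N : ℕ => Real.log (B N) / N) atTop (𝓝 L) := by
    have h1 : Tendsto (fun N : ℕ => Real.log K / N
        + (Real.log (Zmn σ f (lam + t) 0 N) / N - Real.log (Zmn σ f lam 0 N) / N) - t * a)
        atTop (𝓝 (0 + (φ (lam + t) - φ lam) - t * a)) :=
      Tendsto.sub_const
        ((tendsto_const_div_atTop_nhds_zero_nat _).add ((hH1 (lam + t)).sub (hH1 lam))) _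
    have h2 : (fun N : ℕ => Real.log K / N
        + (Real.log (Zmn σ f (lam + t) 0 N) / N - Real.log (Zmn σ f lam 0 N) / N) - t * a)
        =ᶠ[atTop] (fun N : ℕ => Real.log (B N) / N) := by
      filter_upwards [eventually_ge_atTop 1] with N hN
      have hNpos : (0:ℝ) < N := by exact_mod_cast hN
      have hZl0 := hZpos lam N
      have hZlt0 := hZpos (lam + t) N
      have hBN : B N = K * Real.exp (-(t * ((N : ℝ) * a)))
          * (Zmn σ f (lam + t) 0 N / Zmn σ f lam 0 N) := rfl
      rw [hBN, Real.log_mul (mul_ne_zero hK0.ne' (Real.exp_ne_zero _))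
        (div_pos hZlt0 hZl0).ne', Real.log_mul hK0.ne' (Real.exp_ne_zero _),
        Real.log_exp, Real.log_div hZlt0.ne' hZl0.ne']
      field_simp
      ring
    rw [show (0:ℝ) + (φ (lam + t) - φ lam) - t * a = L by rw [hL]; ring] at h1
    exact h1.congr' h2
  set δ : ℝ := -L / 2 with hδ2
  have hδpos : 0 < δ := by rw [hδ2]; linarith
  have hev : ∀ᶠ N : ℕ in atTop, Real.log (B N) / N < -δ :=
    htend.eventually_lt_const (by rw [hδ2]; linarith)
  obtain ⟨N₁, hN₁⟩ := eventually_atTop.mp hev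
  set N₀ : ℕ := max N₁ 1 with hN₀
  have hBsmall : ∀ N, N₀ ≤ N → B N ≤ Real.exp (-(δ * N)) := by
    intro N hNN
    have h1 : Real.log (B N) / N < -δ := hN₁ N (le_trans (le_max_left _ _) hNN)
    have hNpos : (0:ℝ) < N := by
      have h2 : 1 ≤ N := le_trans (le_max_right _ _) hNN
      exact_mod_cast h2
    have h2 : Real.log (B N) < -(δ * N) := by
      rw [div_lt_iff₀ hNpos] at h1
      linarith
    have h3 := Real.exp_lt_exp.mpr h2
    rw [Real.exp_log (hB0 N)] at h3
    exact h3.le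
  set ρ : ℝ := Real.exp (-δ) with hρ
  have hρ1 : ρ < 1 := by
    rw [hρ, show (1:ℝ) = Real.exp 0 from (Real.exp_zero).symm]
    exact Real.exp_lt_exp.mpr (by linarith)
  have hρ0 : 0 < ρ := Real.exp_pos _
  set c : ℝ := Real.exp (δ * N₀) with hc
  have hcρ : ∀ N : ℕ, c * ρ ^ N = Real.exp (δ * N₀ - δ * N) := by
    intro N
    rw [hc, hρ, ← Real.exp_nat_mul, ← Real.exp_add]
    ring_nf
  have huni : ∀ N : ℕ, μ (A N) ≤ ENNReal.ofReal (c * ρ ^ N) := by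
    intro N
    rcases le_or_gt N₀ N with h | h
    · refine (hbound N (le_trans (le_max_right _ _) h)).trans (ENNReal.ofReal_le_ofReal ?_)
      refine (hBsmall N h).trans ?_
      rw [hcρ]
      apply Real.exp_le_exp.mpr
      have h0 : (0:ℝ) ≤ δ * N₀ := by positivity
      linarith
    · calc μ (A N) ≤ 1 := prob_le_one
        _ ≤ ENNReal.ofReal (c * ρ ^ N) := by
          rw [hcρ, ← ENNReal.ofReal_one]
          apply ENNReal.ofReal_le_ofReal
          apply Real.one_le_exp
          have hNN : (N:ℝ) ≤ (N₀:ℝ) := by exact_mod_cast h.le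
          nlinarith
  have htsum : ∑' N, μ (A N) ≠ ⊤ := by
    have h1 : ∑' N, μ (A N) ≤ ∑' N : ℕ, ENNReal.ofReal (c * ρ ^ N) :=
      ENNReal.tsum_le_tsum huni
    have h2 : ∀ N : ℕ, ENNReal.ofReal (c * ρ ^ N)
        = ENNReal.ofReal c * ENNReal.ofReal ρ ^ N := by
      intro N
      rw [ENNReal.ofReal_mul (Real.exp_pos _).le, ENNReal.ofReal_pow hρ0.le]
    rw [tsum_congr h2, ENNReal.tsum_mul_left, ENNReal.tsum_geometric] at h1
    refine ne_top_of_le_ne_top ?_ h1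
    apply ENNReal.mul_ne_top ENNReal.ofReal_ne_top
    rw [Ne, ENNReal.inv_eq_top]
    have h3 : ENNReal.ofReal ρ < 1 := by rwa [ENNReal.ofReal_lt_one]
    exact (tsub_pos_of_lt h3).ne'
  filter_upwards [MeasureTheory.ae_eventually_notMem htsum] with x hx
  filter_upwards [hx] with N hN
  exact not_le.mp hN

end Main

/-- Law of large numbers for Gibbs measures: under (H1) and (H2),
if `μ` is a Gibbs measure at parameter `λ`, then `μ`-a.e.
`φ'₋(λ) ≤ liminf S_N f/N ≤ limsup S_N f/N ≤ φ'₊(λ)`. -/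
theorem lln_for_gibbs {S : Type*} [Fintype S] [TopologicalSpace S]
    [DiscreteTopology S] [MeasurableSpace S] [BorelSpace S] (hq : 2 ≤ Fintype.card S)
    (σ : Measure (ℕ → S)) [IsProbabilityMeasure σ]
    (hσ : ∀ (m : ℕ) (a : Fin m → S), σ (cyl a) = (Fintype.card S : ℝ≥0∞)⁻¹ ^ m)
    (f : ℕ → (ℕ → S) → ℝ) (hfc : ∀ n, Continuous (f n))
    (M : ℝ) (hfb : ∀ n x, |f n x| ≤ M)
    (φ : ℝ → ℝ)
    (hH1 : ∀ t : ℝ, Tendsto (fun n : ℕ => Real.log (Zmn σ f t 0 n) / n) atTop (𝓝 (φ t)))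
    (D : ℝ) (hH2 : H2 f D)
    (lam : ℝ) (μ : Measure (ℕ → S)) [IsProbabilityMeasure μ] (C : ℝ) (hC : 1 ≤ C)
    (hGibbs : ∀ n : ℕ, 1 ≤ n → ∀ x : ℕ → S,
      C⁻¹ ≤ (μ (cyl fun i : Fin n => x i)).toReal
          * ((Fintype.card S : ℝ) ^ n * Zmn σ f lam 0 n) / Real.exp (lam * birk f 0 n x) ∧
      (μ (cyl fun i : Fin n => x i)).toReal
          * ((Fintype.card S : ℝ) ^ n * Zmn σ f lam 0 n) / Real.exp (lam * birk f 0 n x) ≤ C)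
    (dm dp : ℝ)
    (hdm : HasDerivWithinAt φ dm (Set.Iio lam) lam)
    (hdp : HasDerivWithinAt φ dp (Set.Ioi lam) lam) :
    ∀ᵐ x ∂μ, dm ≤ Filter.liminf (fun N : ℕ => birk f 0 N x / N) atTop ∧
      Filter.limsup (fun N : ℕ => birk f 0 N x / N) atTop ≤ dp := by
  have hS : Nonempty S := Fintype.card_pos_iff.mp (by omega)
  have hM : 0 ≤ M := le_trans (abs_nonneg _) (hfb 0 (fun _ => Classical.arbitrary S))
  have hbdd : ∀ x : ℕ → S, ∀ N : ℕ, |birk f 0 N x / N| ≤ M := by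
    intro x N
    rcases Nat.eq_zero_or_pos N with h0 | h1
    · simpa [h0, birk] using hM
    · have hNpos : (0:ℝ) < N := by exact_mod_cast h1
      rw [abs_div, abs_of_pos hNpos, div_le_iff₀ hNpos]
      calc |birk f 0 N x| ≤ N * M := abs_birk_le hfb N x
        _ = M * N := mul_comm _ _
  have hcb1 : ∀ x : ℕ → S, IsCoboundedUnder (· ≥ ·) atTop
      (fun N : ℕ => birk f 0 N x / N) := fun x =>
    isCoboundedUnder_ge_of_eventually_le atTop
      (Eventually.of_forall fun N => (abs_le.mp (hbdd x N)).2)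
  have hcb2 : ∀ x : ℕ → S, IsCoboundedUnder (· ≤ ·) atTop
      (fun N : ℕ => birk f 0 N x / N) := fun x =>
    isCoboundedUnder_le_of_eventually_le atTop
      (Eventually.of_forall fun N => (abs_le.mp (hbdd x N)).1)
  -- upper bound
  have up : ∀ k : ℕ, ∀ᵐ x ∂μ,
      limsup (fun N : ℕ => birk f 0 N x / N) atTop ≤ dp + 1 / ((k : ℝ) + 1) := by
    intro k
    have hε0 : (0:ℝ) < 1 / ((k : ℝ) + 1) := by positivity
    obtain ⟨y, hy1, hy2⟩ : ∃ y, slope φ lam y < dp + 1 / ((k : ℝ) + 1) ∧ y ∈ Set.Ioi lam := by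
      have hslope := hasDerivWithinAt_iff_tendsto_slope.mp hdp
      rw [show Set.Ioi lam \ {lam} = Set.Ioi lam from
        Set.diff_singleton_eq_self (by simp)] at hslope
      haveI := nhdsGT_neBot lam
      exact ((hslope.eventually_lt_const (by linarith)).and self_mem_nhdsWithin).exists
    rw [Set.mem_Ioi] at hy2
    set t : ℝ := y - lam with ht
    have ht0 : 0 < t := by rw [ht]; linarith
    have hlt : φ (lam + t) - φ lam < t * (dp + 1 / ((k : ℝ) + 1)) := by
      rw [slope_def_field, ← ht] at hy1
      have hyt : lam + t = y := by rw [ht]; ring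
      rw [hyt]
      have h1 := mul_lt_mul_of_pos_right hy1 ht0
      rw [div_mul_cancel₀ _ ht0.ne'] at h1
      linarith
    have hkey := key_lemma hq σ hσ f hfc M hfb φ hH1 D hH2 lam μ C hC hGibbs
      t (dp + 1 / ((k : ℝ) + 1)) hlt
    filter_upwards [hkey] with x hx
    refine limsup_le_of_le (hcb2 x) ?_
    filter_upwards [hx, eventually_ge_atTop 1] with N h1 h2
    have hNpos : (0:ℝ) < N := by exact_mod_cast h2
    have h3 : birk f 0 N x < (N : ℝ) * (dp + 1 / ((k : ℝ) + 1)) :=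
      lt_of_mul_lt_mul_left h1 ht0.le
    rw [div_le_iff₀ hNpos]
    linarith
  -- lower bound
  have low : ∀ k : ℕ, ∀ᵐ x ∂μ,
      dm - 1 / ((k : ℝ) + 1) ≤ liminf (fun N : ℕ => birk f 0 N x / N) atTop := by
    intro k
    have hε0 : (0:ℝ) < 1 / ((k : ℝ) + 1) := by positivity
    obtain ⟨y, hy1, hy2⟩ : ∃ y, dm - 1 / ((k : ℝ) + 1) < slope φ lam y ∧ y ∈ Set.Iio lam := by
      have hslope := hasDerivWithinAt_iff_tendsto_slope.mp hdm
      rw [show Set.Iio lam \ {lam} = Set.Iio lam from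
        Set.diff_singleton_eq_self (by simp)] at hslope
      haveI := nhdsLT_neBot lam
      exact ((hslope.eventually_const_lt (by linarith)).and self_mem_nhdsWithin).exists
    rw [Set.mem_Iio] at hy2
    set t : ℝ := y - lam with ht
    have ht0 : t < 0 := by rw [ht]; linarith
    have hlt : φ (lam + t) - φ lam < t * (dm - 1 / ((k : ℝ) + 1)) := by
      rw [slope_def_field, ← ht] at hy1
      have hyt : lam + t = y := by rw [ht]; ring
      rw [hyt]
      have h1 := (lt_div_iff_of_neg ht0).mp hy1
      linarith
    have hkey := key_lemma hq σ hσ f hfc M hfb φ hH1 D hH2 lam μ C hC hGibbs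
      t (dm - 1 / ((k : ℝ) + 1)) hlt
    filter_upwards [hkey] with x hx
    refine le_liminf_of_le (hcb1 x) ?_
    filter_upwards [hx, eventually_ge_atTop 1] with N h1 h2
    have hNpos : (0:ℝ) < N := by exact_mod_cast h2
    have h3 : (N : ℝ) * (dm - 1 / ((k : ℝ) + 1)) < birk f 0 N x := by
      have h4 : (-t) * ((N : ℝ) * (dm - 1 / ((k : ℝ) + 1))) < (-t) * birk f 0 N x := by
        simp only [neg_mul]
        linarith
      exact lt_of_mul_lt_mul_left h4 (by linarith)
    rw [le_div_iff₀ hNpos]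
    linarith
  have hall := (MeasureTheory.ae_all_iff.mpr up).and (MeasureTheory.ae_all_iff.mpr low)
  filter_upwards [hall] with x hx
  obtain ⟨hup, hlow⟩ := hx
  constructor
  · refine le_of_forall_pos_le_add ?_
    intro ε hε
    obtain ⟨k, hk⟩ := exists_nat_one_div_lt hε
    have h1 := hlow k
    linarith
  · refine le_of_forall_pos_le_add ?_
    intro ε hε
    obtain ⟨k, hk⟩ := exists_nat_one_div_lt hε
    have h1 := hup k
    linarith
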